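/- Let x₁, x₂, τ₁, τ₂ ∈ ℝ with τ₁ > τ₂, and fix reals c₁, c₂, c₃, c₄ with c₁, c₃ > 0 > c₂, c₄ and c₂ + τ₁ > c₃ + τ₂. Let Γ_j = c_j + iℝ (j = 1,2,3,4) be the corresponding vertical lines, oriented with increasing imaginary part, and set S₁(z) = z³/3 − x₁·z, S₂(z) = z³/3 − x₂·z. For N₁, N₂ ∈ ℤ_{≥0} define K(N₁,N₂) = ((−1)^{N₁+N₂}/(N₁!·N₂!)) · ∫_{Γ₁^{N₁}}∫_{Γ₂^{N₁}}∫_{Γ₃^{N₂}}∫_{Γ₄^{N₂}} det D̂ · ∏_{i=1}^{N₁} exp(S₁(z_i) − S₁(w_i))/(z_i − w_i) · ∏_{i=1}^{N₂} exp(S₂(ẑ_i) − S₂(ŵ_i))/(ẑ_i − ŵ_i) ∏ dŵ_i/(2πi) ∏ dẑ_i/(2πi) ∏ dw_i/(2πi) ∏ dz_i/(2πi), where z_i ∈ Γ₁, w_i ∈ Γ₂ (i = 1,…,N₁), ẑ_i ∈ Γ₃, ŵ_i ∈ Γ₄ (i = 1,…,N₂), and D̂ is the (N₁+N₂)×(N₁+N₂)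 block matrix with blocks D̂₁₁ = [1/(z_i − w_j)], D̂₁₂ = [1/(z_i − ŵ_j + τ₁ − τ₂)], D̂₂₁ = [1/(ẑ_i − w_j − τ₁ + τ₂)], D̂₂₂ = [1/(ẑ_i − ŵ_j)]; for N₁ = N₂ = 0 set K(0,0) = 1. Then the integrand is absolutely integrable (so K(N₁,N₂) is well defined), and there exists a constant C > 0, depending on x₁, x₂, τ₁, τ₂ and c₁, c₂, c₃, c₄, such that for all N₁, N₂ ≥ 0, |K(N₁,N₂)| ≤ C^{N₁+N₂}·(N₁+N₂)^{−(N₁+N₂)/2}, with the convention 0⁰ = 1. -/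

import Mathlib

open Finset Matrix MeasureTheory
open scoped ComplexOrder

noncomputable def cubicS (x : ℝ) (ζ : ℂ) : ℂ := ζ ^ 3 / 3 - (x : ℂ) * ζ

/-- The integrand of `K(N₁,N₂)`, with each vertical line `Γ_j = c_j + iℝ` parametrized by a real
variable (so that `dz/(2πi) = ds/(2π)` for each variable). -/
noncomputable def airyIntegrand (x₁ x₂ τ₁ τ₂ c₁ c₂ c₃ c₄ : ℝ) (N₁ N₂ : ℕ)
    (p : (Fin N₁ → ℝ) × (Fin N₁ → ℝ) × (Fin N₂ → ℝ) × (Fin N₂ → ℝ)) : ℂ :=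
  let z : Fin N₁ → ℂ := fun i => (c₁ : ℂ) + Complex.I * (p.1 i : ℂ)
  let w : Fin N₁ → ℂ := fun i => (c₂ : ℂ) + Complex.I * (p.2.1 i : ℂ)
  let zh : Fin N₂ → ℂ := fun i => (c₃ : ℂ) + Complex.I * (p.2.2.1 i : ℂ)
  let wh : Fin N₂ → ℂ := fun i => (c₄ : ℂ) + Complex.I * (p.2.2.2 i : ℂ)
  Matrix.det (Matrix.fromBlocks
      (Matrix.of fun i j => (z i - w j)⁻¹)
      (Matrix.of fun i j => (z i - wh j + (τ₁ : ℂ) - (τ₂ : ℂ))⁻¹)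
      (Matrix.of fun i j => (zh i - w j - (τ₁ : ℂ) + (τ₂ : ℂ))⁻¹)
      (Matrix.of fun i j => (zh i - wh j)⁻¹)) *
    (∏ i : Fin N₁, Complex.exp (cubicS x₁ (z i) - cubicS x₁ (w i)) / (z i - w i)) *
    (∏ i : Fin N₂, Complex.exp (cubicS x₂ (zh i) - cubicS x₂ (wh i)) / (zh i - wh i))

noncomputable def airyK (x₁ x₂ τ₁ τ₂ c₁ c₂ c₃ c₄ : ℝ) (N₁ N₂ : ℕ) : ℂ :=
  (-1 : ℂ) ^ (N₁ + N₂) / ((N₁.factorial : ℂ) * (N₂.factorial : ℂ)) *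
    ((2 * (Real.pi : ℂ))⁻¹) ^ (2 * N₁ + 2 * N₂) *
    ∫ p, airyIntegrand x₁ x₂ τ₁ τ₂ c₁ c₂ c₃ c₄ N₁ N₂ p

/-! ### Auxiliary definitions -/

noncomputable def gaussF (b : ℝ) (s : ℝ) : ℝ := Real.exp (-b * s ^ 2)

noncomputable def auxM (τ₁ τ₂ c₁ c₂ c₃ c₄ : ℝ) : ℝ :=
  max (max (c₁ - c₂)⁻¹ (c₁ - c₄ + (τ₁ - τ₂))⁻¹) (max ((c₂ + τ₁) - (c₃ + τ₂))⁻¹ (c₃ - c₄)⁻¹)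

noncomputable def auxK (x a b : ℝ) : ℝ :=
  Real.exp (a ^ 3 / 3 - x * a - b ^ 3 / 3 + x * b) * (a - b)⁻¹

noncomputable def auxG (x₁ x₂ τ₁ τ₂ c₁ c₂ c₃ c₄ : ℝ) (N₁ N₂ : ℕ)
    (p : (Fin N₁ → ℝ) × (Fin N₁ → ℝ) × (Fin N₂ → ℝ) × (Fin N₂ → ℝ)) : ℝ :=
  (Real.sqrt (((N₁ + N₂ : ℕ) : ℝ) ^ (N₁ + N₂)) * auxM τ₁ τ₂ c₁ c₂ c₃ c₄ ^ (N₁ + N₂) *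
      auxK x₁ c₁ c₂ ^ N₁ * auxK x₂ c₃ c₄ ^ N₂) *
    ((∏ i, gaussF c₁ (p.1 i)) * ((∏ i, gaussF (-c₂) (p.2.1 i)) *
      ((∏ i, gaussF c₃ (p.2.2.1 i)) * (∏ i, gaussF (-c₄) (p.2.2.2 i)))))

/-! ### Basic lemmas -/

lemma cubicS_line (x c s : ℝ) :
    cubicS x ((c:ℂ) + Complex.I * (s:ℂ)) =
      ((c^3/3 - c*s^2 - x*c : ℝ) : ℂ) + ((c^2*s - s^3/3 - x*s : ℝ) : ℂ) * Complex.I := by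
  unfold cubicS
  push_cast
  linear_combination ((c:ℂ)*s^2 + (s:ℂ)^3/3*Complex.I) * Complex.I_sq

lemma cubicS_line_re (x c s : ℝ) :
    (cubicS x ((c:ℂ) + Complex.I * (s:ℂ))).re = c^3/3 - c*s^2 - x*c := by
  rw [cubicS_line]
  simp [← Complex.ofReal_pow]

lemma abs_line_sub_ge (a b s t : ℝ) :
    |a - b| ≤ ‖((a:ℂ) + Complex.I * (s:ℂ)) - ((b:ℂ) + Complex.I * (t:ℂ))‖ := by
  have h : (((a:ℂ) + Complex.I * (s:ℂ)) - ((b:ℂ) + Complex.I * (t:ℂ))).re = a - b := by simp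
  rw [← h]
  exact Complex.abs_re_le_norm _

lemma abs_inv_le {u : ℂ} {r : ℝ} (hr : 0 < r) (h : r ≤ |u.re|) :
    ‖u⁻¹‖ ≤ r⁻¹ := by
  rw [norm_inv]
  have h2 : r ≤ ‖u‖ := le_trans h (Complex.abs_re_le_norm u)
  exact inv_anti₀ hr h2

lemma factor_bound (x a b s t : ℝ) (hr : 0 < a - b) :
    ‖Complex.exp (cubicS x ((a:ℂ) + Complex.I * (s:ℂ)) -
        cubicS x ((b:ℂ) + Complex.I * (t:ℂ))) /
      (((a:ℂ) + Complex.I * (s:ℂ)) - ((b:ℂ) + Complex.I * (t:ℂ)))‖ ≤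
    auxK x a b * (gaussF a s * gaussF (-b) t) := by
  rw [norm_div, Complex.norm_exp]
  have hre : (cubicS x ((a:ℂ) + Complex.I * (s:ℂ)) - cubicS x ((b:ℂ) + Complex.I * (t:ℂ))).re
      = (a^3/3 - x*a - b^3/3 + x*b) + (-(a*s^2)) + (-(-b*t^2)) := by
    rw [Complex.sub_re, cubicS_line_re, cubicS_line_re]; ring
  rw [hre, Real.exp_add, Real.exp_add]
  have habs : (a - b) ≤ ‖((a:ℂ) + Complex.I * (s:ℂ)) - ((b:ℂ) + Complex.I * (t:ℂ))‖ := by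
    have := abs_line_sub_ge a b s t
    rw [abs_of_pos hr] at this; exact this
  calc Real.exp (a^3/3 - x*a - b^3/3 + x*b) * Real.exp (-(a*s^2)) * Real.exp (-(-b*t^2)) /
        ‖((a:ℂ) + Complex.I * (s:ℂ)) - ((b:ℂ) + Complex.I * (t:ℂ))‖
      ≤ Real.exp (a^3/3 - x*a - b^3/3 + x*b) * Real.exp (-(a*s^2)) * Real.exp (-(-b*t^2)) /
        (a - b) := by
        apply div_le_div_of_nonneg_left (by positivity) hr habs
    _ = auxK x a b * (gaussF a s * gaussF (-b) t) := by
        unfold auxK gaussF; ring_nf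



-- trace = sum of eigenvalues for hermitian matrices
lemma trace_eq_sum_eig {ι : Type*} [Fintype ι] [DecidableEq ι] {B : Matrix ι ι ℂ}
    (hB : B.IsHermitian) : B.trace = ∑ i, (hB.eigenvalues i : ℂ) := by
  set U : Matrix ι ι ℂ := (Matrix.IsHermitian.eigenvectorUnitary hB : Matrix ι ι ℂ)
  have h1 : star U * B * U = Matrix.diagonal (RCLike.ofReal ∘ hB.eigenvalues) :=
    by have := Matrix.IsHermitian.conjStarAlgAut_star_eigenvectorUnitary hB
       rw [Unitary.conjStarAlgAut_star_apply] at this; exact this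
  have h2 : (star U * B * U).trace = B.trace := by
    rw [Matrix.trace_mul_cycle]
    rw [show U * star U = 1 from (Matrix.mem_unitaryGroup_iff).mp
      (Matrix.IsHermitian.eigenvectorUnitary hB).2, Matrix.one_mul]
  rw [← h2, h1, Matrix.trace_diagonal]
  rfl

lemma det_bound {ι : Type*} [Fintype ι] [DecidableEq ι] (A : Matrix ι ι ℂ) {M : ℝ}
    (hM : 0 ≤ M) (hA : ∀ i j, ‖A i j‖ ≤ M) :
    ‖A.det‖ ≤
      Real.sqrt ((Fintype.card ι : ℝ) ^ (Fintype.card ι)) * M ^ (Fintype.card ι) := by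
  rcases isEmpty_or_nonempty ι with h | h
  · simp [Matrix.det_isEmpty]
  set n := Fintype.card ι with hcard
  have hn : 0 < n := Fintype.card_pos
  set B := Aᴴ * A with hBdef
  have hPSD : B.PosSemidef := Matrix.posSemidef_conjTranspose_mul_self A
  have hH : B.IsHermitian := hPSD.1
  set lam : ι → ℝ := hH.eigenvalues with hlam
  have hlam_nn : ∀ i, 0 ≤ lam i := fun i => hPSD.eigenvalues_nonneg i
  have hdet : (‖A.det‖) ^ 2 = ∏ i, lam i := by
    have h1 : B.det = ∏ i, (lam i : ℂ) := hH.det_eq_prod_eigenvalues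
    have h2 : B.det = ((‖A.det‖ ^ 2 : ℝ) : ℂ) := by
      rw [hBdef, Matrix.det_mul, Matrix.det_conjTranspose, mul_comm]
      rw [show ((‖A.det‖ ^ 2 : ℝ) : ℂ) = ((Complex.normSq A.det : ℝ) : ℂ) by
        rw [Complex.sq_norm]]
      exact Complex.mul_conj _
    rw [h2, ← Complex.ofReal_prod] at h1
    exact_mod_cast h1
  have htr : ∑ i, lam i ≤ (n : ℝ) * ((n:ℝ) * M ^ 2) := by
    have h1 : (↑(∑ i, lam i) : ℂ) = B.trace := by
      rw [trace_eq_sum_eig hH]; push_cast; rfl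
    have h2 : B.trace = ↑(∑ i, ∑ j, Complex.normSq (A j i)) := by
      rw [Matrix.trace]
      push_cast
      refine Finset.sum_congr rfl fun i _ => ?_
      rw [Matrix.diag]
      rw [show B i i = ∑ j, (Aᴴ) i j * A j i from Matrix.mul_apply]
      refine Finset.sum_congr rfl fun j _ => ?_
      rw [Matrix.conjTranspose_apply]
      rw [show (star (A j i)) = (starRingEnd ℂ) (A j i) from rfl, mul_comm]
      exact Complex.mul_conj _
    have h3 : ∑ i, lam i = ∑ i, ∑ j, Complex.normSq (A j i) := by
      have := h1.trans h2
      exact_mod_cast this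
    rw [h3]
    calc ∑ i, ∑ j, Complex.normSq (A j i)
        ≤ ∑ _i : ι, ∑ _j : ι, M ^ 2 := by
          refine Finset.sum_le_sum fun i _ => Finset.sum_le_sum fun j _ => ?_
          rw [← Complex.sq_norm]
          exact pow_le_pow_left₀ (norm_nonneg _) (hA j i) 2
      _ = (n : ℝ) * ((n:ℝ) * M ^ 2) := by
          simp [Finset.sum_const, Finset.card_univ, ← hcard, mul_assoc]
  have hamgm : ∏ i, lam i ≤ ((∑ i, lam i) / n) ^ n := by
    have hw : ∀ i ∈ (univ : Finset ι), (0:ℝ) ≤ (n : ℝ)⁻¹ := fun _ _ => by positivity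
    have hw' : ∑ _i : ι, ((n : ℝ)⁻¹) = 1 := by
      rw [Finset.sum_const, Finset.card_univ, ← hcard, nsmul_eq_mul]
      exact mul_inv_cancel₀ (by exact_mod_cast hn.ne')
    have hz : ∀ i ∈ (univ : Finset ι), (0:ℝ) ≤ lam i := fun i _ => hlam_nn i
    have key := Real.geom_mean_le_arith_mean_weighted univ (fun _ => (n:ℝ)⁻¹) lam hw hw' hz
    have h1 : ∏ i, lam i = (∏ i, lam i ^ ((n:ℝ)⁻¹)) ^ n := by
      rw [← Finset.prod_pow]
      refine Finset.prod_congr rfl fun i _ => ?_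
      rw [← Real.rpow_natCast (lam i ^ ((n:ℝ)⁻¹)) n, ← Real.rpow_mul (hlam_nn i)]
      rw [inv_mul_cancel₀ (by exact_mod_cast hn.ne')]
      exact (Real.rpow_one _).symm
    have h2 : ∑ i, (n:ℝ)⁻¹ * lam i = (∑ i, lam i) / n := by
      rw [← Finset.mul_sum]; ring
    rw [h1]
    rw [h2] at key
    refine pow_le_pow_left₀ ?_ key n
    exact Finset.prod_nonneg fun i _ => Real.rpow_nonneg (hlam_nn i) _
  have hsum_nn : (0:ℝ) ≤ ∑ i, lam i := Finset.sum_nonneg fun i _ => hlam_nn i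
  have hfinal : (‖A.det‖) ^ 2 ≤ (n:ℝ)^n * (M^2)^n := by
    rw [hdet]
    calc ∏ i, lam i ≤ ((∑ i, lam i) / n) ^ n := hamgm
      _ ≤ ((n:ℝ) * M ^ 2) ^ n := by
          refine pow_le_pow_left₀ (div_nonneg hsum_nn (by positivity)) ?_ n
          rw [div_le_iff₀ (by exact_mod_cast hn)]
          calc ∑ i, lam i ≤ (n : ℝ) * ((n:ℝ) * M ^ 2) := htr
            _ = (n:ℝ) * M ^2 * n := by ring
      _ = (n:ℝ)^n * (M^2)^n := mul_pow _ _ _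
  have h0 : (0:ℝ) ≤ ‖A.det‖ := norm_nonneg _
  rw [show Real.sqrt ((n : ℝ) ^ n) * M ^ n = Real.sqrt ((n:ℝ)^n * (M^2)^n) by
    rw [Real.sqrt_mul (by positivity)]
    congr 1
    rw [← pow_mul, show 2 * n = n * 2 by ring, pow_mul]
    exact (Real.sqrt_sq (by positivity)).symm]
  rw [show ‖A.det‖ = Real.sqrt ((‖A.det‖)^2) from
    (Real.sqrt_sq h0).symm]
  exact Real.sqrt_le_sqrt hfinal

lemma integrand_le (x₁ x₂ τ₁ τ₂ : ℝ) (hτ : τ₂ < τ₁) (c₁ c₂ c₃ c₄ : ℝ)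
    (hc₁ : 0 < c₁) (hc₃ : 0 < c₃) (hc₂ : c₂ < 0) (hc₄ : c₄ < 0) (hc : c₃ + τ₂ < c₂ + τ₁)
    (N₁ N₂ : ℕ) (p : (Fin N₁ → ℝ) × (Fin N₁ → ℝ) × (Fin N₂ → ℝ) × (Fin N₂ → ℝ)) :
    ‖airyIntegrand x₁ x₂ τ₁ τ₂ c₁ c₂ c₃ c₄ N₁ N₂ p‖ ≤
      auxG x₁ x₂ τ₁ τ₂ c₁ c₂ c₃ c₄ N₁ N₂ p := by
  have hr₁ : (0:ℝ) < c₁ - c₂ := by linarith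
  have hr₂ : (0:ℝ) < c₁ - c₄ + (τ₁ - τ₂) := by linarith
  have hr₃ : (0:ℝ) < (c₂ + τ₁) - (c₃ + τ₂) := by linarith
  have hr₄ : (0:ℝ) < c₃ - c₄ := by linarith
  set M := auxM τ₁ τ₂ c₁ c₂ c₃ c₄ with hMdef
  have hM0 : 0 ≤ M := le_trans (by positivity) (le_trans (le_max_left _ _) (le_max_left _ _))
  simp only [airyIntegrand]
  rw [norm_mul, norm_mul, norm_prod, norm_prod]
  -- determinant bound
  have hD : ‖Matrix.det (Matrix.fromBlocks
      (Matrix.of fun (i : Fin N₁) (j : Fin N₁) =>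
        (((c₁:ℂ) + Complex.I * (p.1 i : ℂ)) - ((c₂:ℂ) + Complex.I * (p.2.1 j : ℂ)))⁻¹)
      (Matrix.of fun (i : Fin N₁) (j : Fin N₂) =>
        (((c₁:ℂ) + Complex.I * (p.1 i : ℂ)) - ((c₄:ℂ) + Complex.I * (p.2.2.2 j : ℂ)) + (τ₁:ℂ) - (τ₂:ℂ))⁻¹)
      (Matrix.of fun (i : Fin N₂) (j : Fin N₁) =>
        (((c₃:ℂ) + Complex.I * (p.2.2.1 i : ℂ)) - ((c₂:ℂ) + Complex.I * (p.2.1 j : ℂ)) - (τ₁:ℂ) + (τ₂:ℂ))⁻¹)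
      (Matrix.of fun (i : Fin N₂) (j : Fin N₂) =>
        (((c₃:ℂ) + Complex.I * (p.2.2.1 i : ℂ)) - ((c₄:ℂ) + Complex.I * (p.2.2.2 j : ℂ)))⁻¹))‖ ≤
      Real.sqrt (((N₁ + N₂ : ℕ) : ℝ) ^ (N₁ + N₂)) * M ^ (N₁ + N₂) := by
    have hcard : Fintype.card (Fin N₁ ⊕ Fin N₂) = N₁ + N₂ := by simp
    have := det_bound (ι := Fin N₁ ⊕ Fin N₂) (Matrix.fromBlocks
      (Matrix.of fun (i : Fin N₁) (j : Fin N₁) =>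
        (((c₁:ℂ) + Complex.I * (p.1 i : ℂ)) - ((c₂:ℂ) + Complex.I * (p.2.1 j : ℂ)))⁻¹)
      (Matrix.of fun (i : Fin N₁) (j : Fin N₂) =>
        (((c₁:ℂ) + Complex.I * (p.1 i : ℂ)) - ((c₄:ℂ) + Complex.I * (p.2.2.2 j : ℂ)) + (τ₁:ℂ) - (τ₂:ℂ))⁻¹)
      (Matrix.of fun (i : Fin N₂) (j : Fin N₁) =>
        (((c₃:ℂ) + Complex.I * (p.2.2.1 i : ℂ)) - ((c₂:ℂ) + Complex.I * (p.2.1 j : ℂ)) - (τ₁:ℂ) + (τ₂:ℂ))⁻¹)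
      (Matrix.of fun (i : Fin N₂) (j : Fin N₂) =>
        (((c₃:ℂ) + Complex.I * (p.2.2.1 i : ℂ)) - ((c₄:ℂ) + Complex.I * (p.2.2.2 j : ℂ)))⁻¹))
      hM0 ?_
    · rw [hcard] at this; exact this
    · intro i j
      rcases i with i | i <;> rcases j with j | j <;>
        simp only [Matrix.fromBlocks_apply₁₁, Matrix.fromBlocks_apply₁₂,
          Matrix.fromBlocks_apply₂₁, Matrix.fromBlocks_apply₂₂, Matrix.of_apply]
      · refine le_trans (abs_inv_le hr₁ ?_) ?_
        · have hre : ((((c₁:ℂ) + Complex.I * (p.1 i : ℂ)) -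
              ((c₂:ℂ) + Complex.I * (p.2.1 j : ℂ)))).re = c₁ - c₂ := by simp
          rw [hre, abs_of_pos hr₁]
        · exact le_trans (le_max_left _ _) (le_max_left _ _)
      · refine le_trans (abs_inv_le hr₂ ?_) ?_
        · have hre : ((((c₁:ℂ) + Complex.I * (p.1 i : ℂ)) -
              ((c₄:ℂ) + Complex.I * (p.2.2.2 j : ℂ)) + (τ₁:ℂ) - (τ₂:ℂ))).re
              = c₁ - c₄ + (τ₁ - τ₂) := by simp; ring
          rw [hre, abs_of_pos hr₂]
        · exact le_trans (le_max_right _ _) (le_max_left _ _)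
      · refine le_trans (abs_inv_le hr₃ ?_) ?_
        · have hre : ((((c₃:ℂ) + Complex.I * (p.2.2.1 i : ℂ)) -
              ((c₂:ℂ) + Complex.I * (p.2.1 j : ℂ)) - (τ₁:ℂ) + (τ₂:ℂ))).re
              = -((c₂ + τ₁) - (c₃ + τ₂)) := by simp; ring
          rw [hre, abs_neg, abs_of_pos hr₃]
        · exact le_trans (le_max_left _ _) (le_max_right _ _)
      · refine le_trans (abs_inv_le hr₄ ?_) ?_
        · have hre : ((((c₃:ℂ) + Complex.I * (p.2.2.1 i : ℂ)) -
              ((c₄:ℂ) + Complex.I * (p.2.2.2 j : ℂ)))).re = c₃ - c₄ := by simp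
          rw [hre, abs_of_pos hr₄]
        · exact le_trans (le_max_right _ _) (le_max_right _ _)
  -- product bounds
  have hP₁ : ∏ i : Fin N₁, ‖Complex.exp (cubicS x₁ ((c₁:ℂ) + Complex.I * (p.1 i : ℂ)) -
        cubicS x₁ ((c₂:ℂ) + Complex.I * (p.2.1 i : ℂ))) /
        (((c₁:ℂ) + Complex.I * (p.1 i : ℂ)) - ((c₂:ℂ) + Complex.I * (p.2.1 i : ℂ)))‖ ≤
      auxK x₁ c₁ c₂ ^ N₁ * ((∏ i, gaussF c₁ (p.1 i)) * (∏ i, gaussF (-c₂) (p.2.1 i))) := by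
    calc ∏ i : Fin N₁, ‖Complex.exp (cubicS x₁ ((c₁:ℂ) + Complex.I * (p.1 i : ℂ)) -
            cubicS x₁ ((c₂:ℂ) + Complex.I * (p.2.1 i : ℂ))) /
            (((c₁:ℂ) + Complex.I * (p.1 i : ℂ)) - ((c₂:ℂ) + Complex.I * (p.2.1 i : ℂ)))‖
        ≤ ∏ i : Fin N₁, auxK x₁ c₁ c₂ * (gaussF c₁ (p.1 i) * gaussF (-c₂) (p.2.1 i)) :=
          Finset.prod_le_prod (fun i _ => norm_nonneg _)
            (fun i _ => factor_bound x₁ c₁ c₂ (p.1 i) (p.2.1 i) hr₁)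
      _ = auxK x₁ c₁ c₂ ^ N₁ * ((∏ i, gaussF c₁ (p.1 i)) * (∏ i, gaussF (-c₂) (p.2.1 i))) := by
          rw [Finset.prod_mul_distrib, Finset.prod_mul_distrib, Finset.prod_const,
            Finset.card_univ, Fintype.card_fin]
  have hP₂ : ∏ i : Fin N₂, ‖Complex.exp (cubicS x₂ ((c₃:ℂ) + Complex.I * (p.2.2.1 i : ℂ)) -
        cubicS x₂ ((c₄:ℂ) + Complex.I * (p.2.2.2 i : ℂ))) /
        (((c₃:ℂ) + Complex.I * (p.2.2.1 i : ℂ)) - ((c₄:ℂ) + Complex.I * (p.2.2.2 i : ℂ)))‖ ≤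
      auxK x₂ c₃ c₄ ^ N₂ * ((∏ i, gaussF c₃ (p.2.2.1 i)) * (∏ i, gaussF (-c₄) (p.2.2.2 i))) := by
    calc ∏ i : Fin N₂, ‖Complex.exp (cubicS x₂ ((c₃:ℂ) + Complex.I * (p.2.2.1 i : ℂ)) -
            cubicS x₂ ((c₄:ℂ) + Complex.I * (p.2.2.2 i : ℂ))) /
            (((c₃:ℂ) + Complex.I * (p.2.2.1 i : ℂ)) - ((c₄:ℂ) + Complex.I * (p.2.2.2 i : ℂ)))‖
        ≤ ∏ i : Fin N₂, auxK x₂ c₃ c₄ * (gaussF c₃ (p.2.2.1 i) * gaussF (-c₄) (p.2.2.2 i)) :=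
          Finset.prod_le_prod (fun i _ => norm_nonneg _)
            (fun i _ => factor_bound x₂ c₃ c₄ (p.2.2.1 i) (p.2.2.2 i) hr₄)
      _ = auxK x₂ c₃ c₄ ^ N₂ * ((∏ i, gaussF c₃ (p.2.2.1 i)) * (∏ i, gaussF (-c₄) (p.2.2.2 i))) := by
          rw [Finset.prod_mul_distrib, Finset.prod_mul_distrib, Finset.prod_const,
            Finset.card_univ, Fintype.card_fin]
  have hg1 : (0:ℝ) ≤ ∏ i, gaussF c₁ (p.1 i) :=
    Finset.prod_nonneg fun i _ => Real.exp_nonneg _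
  have hg2 : (0:ℝ) ≤ ∏ i, gaussF (-c₂) (p.2.1 i) :=
    Finset.prod_nonneg fun i _ => Real.exp_nonneg _
  have hg3 : (0:ℝ) ≤ ∏ i, gaussF c₃ (p.2.2.1 i) :=
    Finset.prod_nonneg fun i _ => Real.exp_nonneg _
  have hg4 : (0:ℝ) ≤ ∏ i, gaussF (-c₄) (p.2.2.2 i) :=
    Finset.prod_nonneg fun i _ => Real.exp_nonneg _
  have hK₁ : (0:ℝ) ≤ auxK x₁ c₁ c₂ := by
    unfold auxK; positivity
  have hK₂ : (0:ℝ) ≤ auxK x₂ c₃ c₄ := by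
    unfold auxK; positivity
  calc _ ≤ (Real.sqrt (((N₁ + N₂ : ℕ) : ℝ) ^ (N₁ + N₂)) * M ^ (N₁ + N₂)) *
        (auxK x₁ c₁ c₂ ^ N₁ * ((∏ i, gaussF c₁ (p.1 i)) * (∏ i, gaussF (-c₂) (p.2.1 i)))) *
        (auxK x₂ c₃ c₄ ^ N₂ * ((∏ i, gaussF c₃ (p.2.2.1 i)) * (∏ i, gaussF (-c₄) (p.2.2.2 i)))) := by
        apply mul_le_mul
        · apply mul_le_mul hD hP₁ (Finset.prod_nonneg fun i _ => norm_nonneg _)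
            (by positivity)
        · exact hP₂
        · exact Finset.prod_nonneg fun i _ => norm_nonneg _
        · positivity
    _ = auxG x₁ x₂ τ₁ τ₂ c₁ c₂ c₃ c₄ N₁ N₂ p := by
        unfold auxG
        rw [← hMdef]
        ring

lemma ne_of_re {u : ℂ} (h : u.re ≠ 0) : u ≠ 0 := fun h0 => h (by rw [h0]; simp)

lemma integrand_continuous (x₁ x₂ τ₁ τ₂ : ℝ) (hτ : τ₂ < τ₁) (c₁ c₂ c₃ c₄ : ℝ)
    (hc₁ : 0 < c₁) (hc₃ : 0 < c₃) (hc₂ : c₂ < 0) (hc₄ : c₄ < 0) (hc : c₃ + τ₂ < c₂ + τ₁)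
    (N₁ N₂ : ℕ) :
    Continuous (airyIntegrand x₁ x₂ τ₁ τ₂ c₁ c₂ c₃ c₄ N₁ N₂) := by
  have hr₁ : (0:ℝ) < c₁ - c₂ := by linarith
  have hr₂ : (0:ℝ) < c₁ - c₄ + (τ₁ - τ₂) := by linarith
  have hr₃ : (0:ℝ) < (c₂ + τ₁) - (c₃ + τ₂) := by linarith
  have hr₄ : (0:ℝ) < c₃ - c₄ := by linarith
  set P := (Fin N₁ → ℝ) × (Fin N₁ → ℝ) × (Fin N₂ → ℝ) × (Fin N₂ → ℝ)
  have hz : ∀ i : Fin N₁, Continuous fun p : P => (c₁:ℂ) + Complex.I * ((p.1 i : ℝ) : ℂ) :=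
    fun i => continuous_const.add (continuous_const.mul
      (Complex.continuous_ofReal.comp ((continuous_apply i).comp continuous_fst)))
  have hw : ∀ i : Fin N₁, Continuous fun p : P => (c₂:ℂ) + Complex.I * ((p.2.1 i : ℝ) : ℂ) :=
    fun i => continuous_const.add (continuous_const.mul
      (Complex.continuous_ofReal.comp ((continuous_apply i).comp
        (continuous_fst.comp continuous_snd))))
  have hzh : ∀ i : Fin N₂, Continuous fun p : P => (c₃:ℂ) + Complex.I * ((p.2.2.1 i : ℝ) : ℂ) :=
    fun i => continuous_const.add (continuous_const.mul
      (Complex.continuous_ofReal.comp ((continuous_apply i).comp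
        (continuous_fst.comp (continuous_snd.comp continuous_snd)))))
  have hwh : ∀ i : Fin N₂, Continuous fun p : P => (c₄:ℂ) + Complex.I * ((p.2.2.2 i : ℝ) : ℂ) :=
    fun i => continuous_const.add (continuous_const.mul
      (Complex.continuous_ofReal.comp ((continuous_apply i).comp
        (continuous_snd.comp (continuous_snd.comp continuous_snd)))))
  have hcS : ∀ x : ℝ, Continuous (cubicS x) := by
    intro x; unfold cubicS; fun_prop
  have hzw_ne : ∀ (i j : Fin N₁) (p : P),
      ((c₁:ℂ) + Complex.I * ((p.1 i : ℝ) : ℂ)) - ((c₂:ℂ) + Complex.I * ((p.2.1 j : ℝ) : ℂ)) ≠ 0 := by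
    intro i j p
    apply ne_of_re
    have : (((c₁:ℂ) + Complex.I * ((p.1 i : ℝ) : ℂ)) -
        ((c₂:ℂ) + Complex.I * ((p.2.1 j : ℝ) : ℂ))).re = c₁ - c₂ := by simp
    rw [this]; exact ne_of_gt hr₁
  have hzhwh_ne : ∀ (i j : Fin N₂) (p : P),
      ((c₃:ℂ) + Complex.I * ((p.2.2.1 i : ℝ) : ℂ)) -
        ((c₄:ℂ) + Complex.I * ((p.2.2.2 j : ℝ) : ℂ)) ≠ 0 := by
    intro i j p
    apply ne_of_re
    have : (((c₃:ℂ) + Complex.I * ((p.2.2.1 i : ℝ) : ℂ)) -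
        ((c₄:ℂ) + Complex.I * ((p.2.2.2 j : ℝ) : ℂ))).re = c₃ - c₄ := by simp
    rw [this]; exact ne_of_gt hr₄
  unfold airyIntegrand
  simp only
  apply Continuous.mul
  apply Continuous.mul
  · apply Continuous.matrix_det
    apply continuous_matrix
    intro i j
    rcases i with i | i <;> rcases j with j | j <;>
      simp only [Matrix.fromBlocks_apply₁₁, Matrix.fromBlocks_apply₁₂,
        Matrix.fromBlocks_apply₂₁, Matrix.fromBlocks_apply₂₂, Matrix.of_apply]
    · exact ((hz i).sub (hw j)).inv₀ (hzw_ne i j)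
    · refine ((((hz i).sub (hwh j)).add continuous_const).sub continuous_const).inv₀ ?_
      intro p
      apply ne_of_re
      have : (((c₁:ℂ) + Complex.I * ((p.1 i : ℝ) : ℂ)) -
          ((c₄:ℂ) + Complex.I * ((p.2.2.2 j : ℝ) : ℂ)) + (τ₁:ℂ) - (τ₂:ℂ)).re
          = c₁ - c₄ + (τ₁ - τ₂) := by simp; ring
      simp only [Pi.sub_apply, Pi.add_apply]
      rw [this]; exact ne_of_gt hr₂
    · refine ((((hzh i).sub (hw j)).sub continuous_const).add continuous_const).inv₀ ?_
      intro p
      apply ne_of_re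
      have : (((c₃:ℂ) + Complex.I * ((p.2.2.1 i : ℝ) : ℂ)) -
          ((c₂:ℂ) + Complex.I * ((p.2.1 j : ℝ) : ℂ)) - (τ₁:ℂ) + (τ₂:ℂ)).re
          = -((c₂ + τ₁) - (c₃ + τ₂)) := by simp; ring
      simp only [Pi.sub_apply, Pi.add_apply]
      rw [this]
      intro h
      have : c₂ + τ₁ - (c₃ + τ₂) = 0 := by linarith
      exact (ne_of_gt hr₃) this
    · exact ((hzh i).sub (hwh j)).inv₀ (hzhwh_ne i j)
  · apply continuous_finset_prod
    intro i _
    exact (Complex.continuous_exp.comp (((hcS x₁).comp (hz i)).sub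
      ((hcS x₁).comp (hw i)))).div ((hz i).sub (hw i)) (hzw_ne i i)
  · apply continuous_finset_prod
    intro i _
    exact (Complex.continuous_exp.comp (((hcS x₂).comp (hzh i)).sub
      ((hcS x₂).comp (hwh i)))).div ((hzh i).sub (hwh i)) (hzhwh_ne i i)

lemma auxG_integrable_eq (x₁ x₂ τ₁ τ₂ c₁ c₂ c₃ c₄ : ℝ)
    (hc₁ : 0 < c₁) (hc₃ : 0 < c₃) (hc₂ : c₂ < 0) (hc₄ : c₄ < 0) (N₁ N₂ : ℕ) :
    Integrable (auxG x₁ x₂ τ₁ τ₂ c₁ c₂ c₃ c₄ N₁ N₂) ∧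
    ∫ p, auxG x₁ x₂ τ₁ τ₂ c₁ c₂ c₃ c₄ N₁ N₂ p =
      (Real.sqrt (((N₁ + N₂ : ℕ) : ℝ) ^ (N₁ + N₂)) * auxM τ₁ τ₂ c₁ c₂ c₃ c₄ ^ (N₁ + N₂) *
        auxK x₁ c₁ c₂ ^ N₁ * auxK x₂ c₃ c₄ ^ N₂) *
      ((∫ s, gaussF c₁ s) ^ N₁ * ((∫ s, gaussF (-c₂) s) ^ N₁ *
        ((∫ s, gaussF c₃ s) ^ N₂ * (∫ s, gaussF (-c₄) s) ^ N₂))) := by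
  have hf₁ : Integrable (gaussF c₁) := integrable_exp_neg_mul_sq hc₁
  have hf₂ : Integrable (gaussF (-c₂)) := integrable_exp_neg_mul_sq (by linarith)
  have hf₃ : Integrable (gaussF c₃) := integrable_exp_neg_mul_sq hc₃
  have hf₄ : Integrable (gaussF (-c₄)) := integrable_exp_neg_mul_sq (by linarith)
  have hA : Integrable fun v : Fin N₁ → ℝ => ∏ i, gaussF c₁ (v i) :=
    Integrable.fintype_prod fun _ => hf₁
  have hB : Integrable fun v : Fin N₁ → ℝ => ∏ i, gaussF (-c₂) (v i) :=
    Integrable.fintype_prod fun _ => hf₂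
  have hC : Integrable fun v : Fin N₂ → ℝ => ∏ i, gaussF c₃ (v i) :=
    Integrable.fintype_prod fun _ => hf₃
  have hD : Integrable fun v : Fin N₂ → ℝ => ∏ i, gaussF (-c₄) (v i) :=
    Integrable.fintype_prod fun _ => hf₄
  have hCD : Integrable fun q : (Fin N₂ → ℝ) × (Fin N₂ → ℝ) =>
      (∏ i, gaussF c₃ (q.1 i)) * ∏ i, gaussF (-c₄) (q.2 i) := by
    rw [MeasureTheory.Measure.volume_eq_prod]
    exact hC.mul_prod hD
  have hBCD : Integrable fun q : (Fin N₁ → ℝ) × ((Fin N₂ → ℝ) × (Fin N₂ → ℝ)) =>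
      (∏ i, gaussF (-c₂) (q.1 i)) *
        ((∏ i, gaussF c₃ (q.2.1 i)) * ∏ i, gaussF (-c₄) (q.2.2 i)) := by
    rw [MeasureTheory.Measure.volume_eq_prod]
    exact hB.mul_prod hCD
  have hABCD : Integrable fun p : (Fin N₁ → ℝ) × (Fin N₁ → ℝ) × (Fin N₂ → ℝ) × (Fin N₂ → ℝ) =>
      (∏ i, gaussF c₁ (p.1 i)) * ((∏ i, gaussF (-c₂) (p.2.1 i)) *
        ((∏ i, gaussF c₃ (p.2.2.1 i)) * ∏ i, gaussF (-c₄) (p.2.2.2 i))) := by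
    rw [MeasureTheory.Measure.volume_eq_prod]
    exact hA.mul_prod hBCD
  constructor
  · unfold auxG
    exact hABCD.const_mul _
  · unfold auxG
    rw [MeasureTheory.integral_const_mul]
    have eCD : (∫ q : (Fin N₂ → ℝ) × (Fin N₂ → ℝ),
        (∏ i, gaussF c₃ (q.1 i)) * ∏ i, gaussF (-c₄) (q.2 i)) =
        (∫ v : Fin N₂ → ℝ, ∏ i, gaussF c₃ (v i)) *
          ∫ v : Fin N₂ → ℝ, ∏ i, gaussF (-c₄) (v i) :=
      MeasureTheory.integral_prod_mul (fun v : Fin N₂ → ℝ => ∏ i, gaussF c₃ (v i))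
        (fun v : Fin N₂ → ℝ => ∏ i, gaussF (-c₄) (v i))
    have eBCD : (∫ q : (Fin N₁ → ℝ) × ((Fin N₂ → ℝ) × (Fin N₂ → ℝ)),
        (∏ i, gaussF (-c₂) (q.1 i)) *
          ((∏ i, gaussF c₃ (q.2.1 i)) * ∏ i, gaussF (-c₄) (q.2.2 i))) =
        (∫ v : Fin N₁ → ℝ, ∏ i, gaussF (-c₂) (v i)) *
          ∫ q : (Fin N₂ → ℝ) × (Fin N₂ → ℝ),
            (∏ i, gaussF c₃ (q.1 i)) * ∏ i, gaussF (-c₄) (q.2 i) :=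
      MeasureTheory.integral_prod_mul (fun v : Fin N₁ → ℝ => ∏ i, gaussF (-c₂) (v i))
        (fun q : (Fin N₂ → ℝ) × (Fin N₂ → ℝ) =>
          (∏ i, gaussF c₃ (q.1 i)) * ∏ i, gaussF (-c₄) (q.2 i))
    have eABCD : (∫ p : (Fin N₁ → ℝ) × (Fin N₁ → ℝ) × (Fin N₂ → ℝ) × (Fin N₂ → ℝ),
        (∏ i, gaussF c₁ (p.1 i)) * ((∏ i, gaussF (-c₂) (p.2.1 i)) *
          ((∏ i, gaussF c₃ (p.2.2.1 i)) * ∏ i, gaussF (-c₄) (p.2.2.2 i)))) =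
        (∫ v : Fin N₁ → ℝ, ∏ i, gaussF c₁ (v i)) *
          ∫ q : (Fin N₁ → ℝ) × ((Fin N₂ → ℝ) × (Fin N₂ → ℝ)),
            (∏ i, gaussF (-c₂) (q.1 i)) *
              ((∏ i, gaussF c₃ (q.2.1 i)) * ∏ i, gaussF (-c₄) (q.2.2 i)) :=
      MeasureTheory.integral_prod_mul (fun v : Fin N₁ → ℝ => ∏ i, gaussF c₁ (v i))
        (fun q : (Fin N₁ → ℝ) × ((Fin N₂ → ℝ) × (Fin N₂ → ℝ)) =>
          (∏ i, gaussF (-c₂) (q.1 i)) *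
            ((∏ i, gaussF c₃ (q.2.1 i)) * ∏ i, gaussF (-c₄) (q.2.2 i)))
    have e1 : ∫ v : Fin N₁ → ℝ, ∏ i, gaussF c₁ (v i) = (∫ s, gaussF c₁ s) ^ N₁ := by
      have := MeasureTheory.integral_fintype_prod_eq_pow (ι := Fin N₁) (gaussF c₁) (μ := volume)
      rw [Fintype.card_fin] at this; exact this
    have e2 : ∫ v : Fin N₁ → ℝ, ∏ i, gaussF (-c₂) (v i) = (∫ s, gaussF (-c₂) s) ^ N₁ := by
      have := MeasureTheory.integral_fintype_prod_eq_pow (ι := Fin N₁) (gaussF (-c₂)) (μ := volume)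
      rw [Fintype.card_fin] at this; exact this
    have e3 : ∫ v : Fin N₂ → ℝ, ∏ i, gaussF c₃ (v i) = (∫ s, gaussF c₃ s) ^ N₂ := by
      have := MeasureTheory.integral_fintype_prod_eq_pow (ι := Fin N₂) (gaussF c₃) (μ := volume)
      rw [Fintype.card_fin] at this; exact this
    have e4 : ∫ v : Fin N₂ → ℝ, ∏ i, gaussF (-c₄) (v i) = (∫ s, gaussF (-c₄) s) ^ N₂ := by
      have := MeasureTheory.integral_fintype_prod_eq_pow (ι := Fin N₂) (gaussF (-c₄)) (μ := volume)
      rw [Fintype.card_fin] at this; exact this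
    rw [eABCD, eBCD, eCD, e1, e2, e3, e4]

lemma fact_bound (N₁ N₂ : ℕ) :
    ((N₁ + N₂ : ℕ) : ℝ) ^ (N₁ + N₂) ≤
      (2 * Real.exp 1) ^ (N₁ + N₂) * (N₁.factorial * N₂.factorial : ℕ) := by
  set n := N₁ + N₂ with hn
  have h1 : (n : ℝ) ^ n ≤ Real.exp 1 ^ n * n.factorial := by
    have hs := Real.sum_le_exp_of_nonneg (x := (n : ℝ)) (by positivity) (n + 1)
    have h2 : ((n : ℝ)) ^ n / n.factorial ≤ Real.exp n := by
      refine le_trans ?_ hs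
      exact Finset.single_le_sum (f := fun i => (n : ℝ) ^ i / i.factorial)
        (fun i _ => by positivity) (Finset.self_mem_range_succ n)
    rw [div_le_iff₀ (by positivity)] at h2
    have : Real.exp (n : ℝ) = Real.exp 1 ^ n := by
      rw [← Real.exp_nat_mul]; norm_num
    rw [this] at h2; exact h2
  have hch : (n.choose N₁ : ℕ) ≤ 2 ^ n := by
    have h4 : n.choose N₁ ≤ ∑ m ∈ range (n + 1), n.choose m :=
      Finset.single_le_sum (f := fun m => n.choose m) (fun i _ => Nat.zero_le _)
        (Finset.mem_range_succ_iff.2 (by omega))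
    simpa [Nat.sum_range_choose] using h4
  have h3 : (n.factorial : ℝ) ≤ 2 ^ n * (N₁.factorial * N₂.factorial : ℕ) := by
    have hfac : n.factorial = n.choose N₁ * N₁.factorial * N₂.factorial := by
      have h5 := Nat.choose_mul_factorial_mul_factorial (show N₁ ≤ n by omega)
      have h6 : n - N₁ = N₂ := by omega
      rw [h6] at h5; exact h5.symm
    have h7 : n.factorial ≤ 2 ^ n * (N₁.factorial * N₂.factorial) := by
      rw [hfac]
      have := Nat.mul_le_mul_right (N₁.factorial * N₂.factorial) hch
      calc n.choose N₁ * N₁.factorial * N₂.factorial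
          = n.choose N₁ * (N₁.factorial * N₂.factorial) := by ring
        _ ≤ 2 ^ n * (N₁.factorial * N₂.factorial) := this
    exact_mod_cast h7
  calc ((n:ℝ))^n ≤ Real.exp 1 ^ n * n.factorial := h1
    _ ≤ Real.exp 1 ^ n * (2 ^ n * (N₁.factorial * N₂.factorial : ℕ)) :=
        mul_le_mul_of_nonneg_left h3 (by positivity)
    _ = (2 * Real.exp 1) ^ n * (N₁.factorial * N₂.factorial : ℕ) := by
        rw [mul_pow]; ring

lemma sqrt_fact_bound (N₁ N₂ : ℕ) :
    Real.sqrt (((N₁ + N₂ : ℕ) : ℝ) ^ (N₁ + N₂)) * ((N₁.factorial * N₂.factorial : ℕ) : ℝ)⁻¹ ≤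
      (2 * Real.exp 1) ^ (N₁ + N₂) * ((N₁ + N₂ : ℕ) : ℝ) ^ (-(((N₁ + N₂ : ℕ) : ℝ)) / 2) := by
  rcases Nat.eq_zero_or_pos (N₁ + N₂) with h0 | hn
  · obtain ⟨h1, h2⟩ := Nat.add_eq_zero.mp h0
    subst h1; subst h2
    norm_num
  have hnR : (0:ℝ) < ((N₁ + N₂ : ℕ) : ℝ) := by exact_mod_cast hn
  set n := N₁ + N₂ with hndef
  have hT : 0 < Real.sqrt ((n : ℝ) ^ n) := Real.sqrt_pos.2 (by positivity)
  have hF : (0:ℝ) < ((N₁.factorial * N₂.factorial : ℕ) : ℝ) := by positivity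
  have hrpow : ((n : ℕ) : ℝ) ^ (-(((n : ℕ) : ℝ)) / 2) = (Real.sqrt ((n : ℝ) ^ n))⁻¹ := by
    have h1 : Real.sqrt ((n : ℝ) ^ n) = ((n:ℕ) : ℝ) ^ (((n : ℕ) : ℝ) / 2) := by
      rw [Real.sqrt_eq_rpow, ← Real.rpow_natCast ((n:ℕ):ℝ) n, ← Real.rpow_mul (le_of_lt hnR)]
      congr 1
      ring
    rw [h1, neg_div, Real.rpow_neg (le_of_lt hnR)]
  rw [hrpow, ← div_eq_mul_inv, ← div_eq_mul_inv, div_le_div_iff₀ hF hT]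
  rw [show Real.sqrt ((n : ℝ) ^ n) * Real.sqrt ((n : ℝ) ^ n) = (n : ℝ) ^ n from
    Real.mul_self_sqrt (by positivity)]
  exact fact_bound N₁ N₂

theorem stmt19 (x₁ x₂ τ₁ τ₂ : ℝ) (hτ : τ₂ < τ₁) (c₁ c₂ c₃ c₄ : ℝ)
    (hc₁ : 0 < c₁) (hc₃ : 0 < c₃) (hc₂ : c₂ < 0) (hc₄ : c₄ < 0) (hc : c₃ + τ₂ < c₂ + τ₁) :
    (∀ N₁ N₂ : ℕ, MeasureTheory.Integrable (airyIntegrand x₁ x₂ τ₁ τ₂ c₁ c₂ c₃ c₄ N₁ N₂)) ∧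
    ∃ C > 0, ∀ N₁ N₂ : ℕ,
      ‖airyK x₁ x₂ τ₁ τ₂ c₁ c₂ c₃ c₄ N₁ N₂‖ ≤
        C ^ (N₁ + N₂) * ((N₁ + N₂ : ℕ) : ℝ) ^ (-(((N₁ + N₂ : ℕ) : ℝ)) / 2) := by
  have hr₁ : (0:ℝ) < c₁ - c₂ := by linarith
  have hr₄ : (0:ℝ) < c₃ - c₄ := by linarith
  have hbound : ∀ N₁ N₂ (p : (Fin N₁ → ℝ) × (Fin N₁ → ℝ) × (Fin N₂ → ℝ) × (Fin N₂ → ℝ)),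
      ‖airyIntegrand x₁ x₂ τ₁ τ₂ c₁ c₂ c₃ c₄ N₁ N₂ p‖ ≤
        auxG x₁ x₂ τ₁ τ₂ c₁ c₂ c₃ c₄ N₁ N₂ p := fun N₁ N₂ p => by
    exact integrand_le x₁ x₂ τ₁ τ₂ hτ c₁ c₂ c₃ c₄ hc₁ hc₃ hc₂ hc₄ hc N₁ N₂ p
  have hint : ∀ N₁ N₂ : ℕ, Integrable (airyIntegrand x₁ x₂ τ₁ τ₂ c₁ c₂ c₃ c₄ N₁ N₂) := by
    intro N₁ N₂
    exact ((auxG_integrable_eq x₁ x₂ τ₁ τ₂ c₁ c₂ c₃ c₄ hc₁ hc₃ hc₂ hc₄ N₁ N₂).1).mono'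
      ((integrand_continuous x₁ x₂ τ₁ τ₂ hτ c₁ c₂ c₃ c₄ hc₁ hc₃ hc₂ hc₄ hc
        N₁ N₂).aestronglyMeasurable)
      (Filter.Eventually.of_forall (hbound N₁ N₂))
  refine ⟨hint, ?_⟩
  have hM0 : 0 ≤ auxM τ₁ τ₂ c₁ c₂ c₃ c₄ :=
    le_trans (le_of_lt (inv_pos.2 hr₁)) (le_trans (le_max_left _ _) (le_max_left _ _))
  have hK₁0 : 0 ≤ auxK x₁ c₁ c₂ :=
    mul_nonneg (Real.exp_nonneg _) (inv_nonneg.2 hr₁.le)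
  have hK₂0 : 0 ≤ auxK x₂ c₃ c₄ :=
    mul_nonneg (Real.exp_nonneg _) (inv_nonneg.2 hr₄.le)
  have hI1 : 0 ≤ ∫ s, gaussF c₁ s := integral_nonneg fun s => Real.exp_nonneg _
  have hI2 : 0 ≤ ∫ s, gaussF (-c₂) s := integral_nonneg fun s => Real.exp_nonneg _
  have hI3 : 0 ≤ ∫ s, gaussF c₃ s := integral_nonneg fun s => Real.exp_nonneg _
  have hI4 : 0 ≤ ∫ s, gaussF (-c₄) s := integral_nonneg fun s => Real.exp_nonneg _
  have hP0 : (0:ℝ) ≤ (2*Real.pi)⁻¹ := inv_nonneg.2 (by positivity)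
  -- the two per-index constants
  have hq₁0 : 0 ≤ ((2*Real.pi)⁻¹)^2 * auxM τ₁ τ₂ c₁ c₂ c₃ c₄ * auxK x₁ c₁ c₂ *
      (∫ s, gaussF c₁ s) * (∫ s, gaussF (-c₂) s) := by positivity
  have hq₂0 : 0 ≤ ((2*Real.pi)⁻¹)^2 * auxM τ₁ τ₂ c₁ c₂ c₃ c₄ * auxK x₂ c₃ c₄ *
      (∫ s, gaussF c₃ s) * (∫ s, gaussF (-c₄) s) := by positivity
  set q₁ := ((2*Real.pi)⁻¹)^2 * auxM τ₁ τ₂ c₁ c₂ c₃ c₄ * auxK x₁ c₁ c₂ *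
      (∫ s, gaussF c₁ s) * (∫ s, gaussF (-c₂) s) with hq₁def
  set q₂ := ((2*Real.pi)⁻¹)^2 * auxM τ₁ τ₂ c₁ c₂ c₃ c₄ * auxK x₂ c₃ c₄ *
      (∫ s, gaussF c₃ s) * (∫ s, gaussF (-c₄) s) with hq₂def
  have hR1 : (1:ℝ) ≤ max 1 (max q₁ q₂) := le_max_left _ _
  have hR0 : (0:ℝ) < max 1 (max q₁ q₂) := lt_of_lt_of_le one_pos hR1
  refine ⟨2 * Real.exp 1 * max 1 (max q₁ q₂), by positivity, ?_⟩
  intro N₁ N₂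
  have hGval := (auxG_integrable_eq x₁ x₂ τ₁ τ₂ c₁ c₂ c₃ c₄ hc₁ hc₃ hc₂ hc₄ N₁ N₂).2
  have h1 : ‖∫ p, airyIntegrand x₁ x₂ τ₁ τ₂ c₁ c₂ c₃ c₄ N₁ N₂ p‖ ≤
      ∫ p, auxG x₁ x₂ τ₁ τ₂ c₁ c₂ c₃ c₄ N₁ N₂ p :=
    norm_integral_le_of_norm_le
      ((auxG_integrable_eq x₁ x₂ τ₁ τ₂ c₁ c₂ c₃ c₄ hc₁ hc₃ hc₂ hc₄ N₁ N₂).1)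
      (Filter.Eventually.of_forall (hbound N₁ N₂))
  rw [hGval] at h1
  have habsK : ‖airyK x₁ x₂ τ₁ τ₂ c₁ c₂ c₃ c₄ N₁ N₂‖
      = ((N₁.factorial : ℝ) * (N₂.factorial : ℝ))⁻¹ * ((2*Real.pi)⁻¹) ^ (2*N₁+2*N₂) *
        ‖∫ p, airyIntegrand x₁ x₂ τ₁ τ₂ c₁ c₂ c₃ c₄ N₁ N₂ p‖ := by
    unfold airyK
    rw [norm_mul, norm_mul, norm_div, norm_pow, norm_pow, norm_inv]
    have ha : ‖(-1 : ℂ)‖ = 1 := by simp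
    have hb : ‖(N₁.factorial : ℂ) * (N₂.factorial : ℂ)‖
        = (N₁.factorial : ℝ) * (N₂.factorial : ℝ) := by
      rw [norm_mul]
      simp
    have hcabs : ‖2 * (Real.pi : ℂ)‖ = 2 * Real.pi := by
      rw [norm_mul]
      simp [abs_of_pos Real.pi_pos]
    rw [ha, one_pow, hb, hcabs, one_div]
  rw [habsK]
  have hF0 : (0:ℝ) < (N₁.factorial : ℝ) * (N₂.factorial : ℝ) := by positivity
  calc ((N₁.factorial : ℝ) * (N₂.factorial : ℝ))⁻¹ * ((2*Real.pi)⁻¹) ^ (2*N₁+2*N₂) *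
        ‖∫ p, airyIntegrand x₁ x₂ τ₁ τ₂ c₁ c₂ c₃ c₄ N₁ N₂ p‖
      ≤ ((N₁.factorial : ℝ) * (N₂.factorial : ℝ))⁻¹ * ((2*Real.pi)⁻¹) ^ (2*N₁+2*N₂) *
        ((Real.sqrt (((N₁ + N₂ : ℕ) : ℝ) ^ (N₁ + N₂)) *
            auxM τ₁ τ₂ c₁ c₂ c₃ c₄ ^ (N₁ + N₂) * auxK x₁ c₁ c₂ ^ N₁ * auxK x₂ c₃ c₄ ^ N₂) *
          ((∫ s, gaussF c₁ s) ^ N₁ * ((∫ s, gaussF (-c₂) s) ^ N₁ *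
            ((∫ s, gaussF c₃ s) ^ N₂ * (∫ s, gaussF (-c₄) s) ^ N₂)))) := by
        apply mul_le_mul_of_nonneg_left h1 (by positivity)
    _ = (Real.sqrt (((N₁ + N₂ : ℕ) : ℝ) ^ (N₁ + N₂)) *
          ((N₁.factorial : ℝ) * (N₂.factorial : ℝ))⁻¹) * (q₁ ^ N₁ * q₂ ^ N₂) := by
        rw [hq₁def, hq₂def]
        generalize (2*Real.pi)⁻¹ = P
        ring
    _ ≤ (Real.sqrt (((N₁ + N₂ : ℕ) : ℝ) ^ (N₁ + N₂)) *
          ((N₁.factorial : ℝ) * (N₂.factorial : ℝ))⁻¹) *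
        (max 1 (max q₁ q₂) ^ N₁ * max 1 (max q₁ q₂) ^ N₂) := by
        apply mul_le_mul_of_nonneg_left _ (by positivity)
        apply mul_le_mul
        · exact pow_le_pow_left₀ hq₁0 (le_trans (le_max_left _ _) (le_max_right _ _)) N₁
        · exact pow_le_pow_left₀ hq₂0 (le_trans (le_max_right _ _) (le_max_right _ _)) N₂
        · exact pow_nonneg hq₂0 N₂
        · exact pow_nonneg hR0.le N₁
    _ = (Real.sqrt (((N₁ + N₂ : ℕ) : ℝ) ^ (N₁ + N₂)) *
          ((N₁.factorial * N₂.factorial : ℕ) : ℝ)⁻¹) * max 1 (max q₁ q₂) ^ (N₁ + N₂) := by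
        rw [pow_add]
        push_cast
        ring
    _ ≤ ((2 * Real.exp 1) ^ (N₁ + N₂) *
          ((N₁ + N₂ : ℕ) : ℝ) ^ (-(((N₁ + N₂ : ℕ) : ℝ)) / 2)) *
        max 1 (max q₁ q₂) ^ (N₁ + N₂) := by
        apply mul_le_mul_of_nonneg_right (sqrt_fact_bound N₁ N₂) (pow_nonneg hR0.le _)
    _ = (2 * Real.exp 1 * max 1 (max q₁ q₂)) ^ (N₁ + N₂) *
        ((N₁ + N₂ : ℕ) : ℝ) ^ (-(((N₁ + N₂ : ℕ) : ℝ)) / 2) := by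
        rw [mul_pow]
        ring
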